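/- Let P be a potential graph with barrier digraph V, let q ∈ S ⊆ N, let T_q ∈ T^{•q}_S be an entering tree subgraph of V with vertex set S and root q, and let T be the corresponding undirected tree. Then T_q has minimum weight among all entering trees in T^{•q}_S if and only if T has minimum weight among all undirected trees that are subgraphs of P with vertex set S. -/

import Mathlib

open scoped Classical

namespace BarrierForests

variable {α : Type*} [Fintype α] [DecidableEq α]

/-- Total weight of a set of arcs. -/
def aweight (v : α → α → ℝ) (A : Finset (α × α)) : ℝ := ∑ a ∈ A, v a.1 a.2

/-- Weight `Υ^A_S` of the arcs of `A` whose tail lies in `S`. -/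
def aweightOn (v : α → α → ℝ) (A : Finset (α × α)) (S : Finset α) : ℝ :=
  ∑ a ∈ A.filter (fun a => a.1 ∈ S), v a.1 a.2

/-- The relation "there is an arc from `i` to `j` in `A`". -/
def arcRel (A : Finset (α × α)) : α → α → Prop := fun i j => (i, j) ∈ A

/-- Entering forest: every vertex has out-degree at most one, and there are no
directed cycles. -/
def IsEForest (A : Finset (α × α)) : Prop :=
  (∀ i j j', (i, j) ∈ A → (i, j') ∈ A → j = j') ∧
  ∀ i, ¬ Relation.TransGen (arcRel A) i i

/-- Roots of a (spanning) entering forest: the vertices with no outgoing arc. -/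
noncomputable def rootSet (A : Finset (α × α)) : Finset α :=
  Finset.univ.filter fun i => ∀ j, (i, j) ∉ A

/-- `𝓕^k`: spanning entering forests of the digraph with arc set `E`
having exactly `k` trees (equivalently, `k` roots). -/
def FSet (E : Finset (α × α)) (k : ℕ) : Set (Finset (α × α)) :=
  {A | A ⊆ E ∧ IsEForest A ∧ (rootSet A).card = k}

/-- The infimum (in `EReal`, so `⊤` for the empty family) of the `w`-weights of the
members of `s`. -/
noncomputable def minW {β : Type*} (s : Set β) (w : β → ℝ) : EReal :=
  sInf ((fun x => (w x : EReal)) '' s)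

/-- `φ^k`: minimum weight of a spanning entering forest with `k` trees. -/
noncomputable def phi (v : α → α → ℝ) (E : Finset (α × α)) (k : ℕ) : EReal :=
  minW (FSet E k) (aweight v)

/-- `F ∈ 𝓕̃^k`: minimal spanning entering forest with `k` trees. -/
def IsMinForest (v : α → α → ℝ) (E : Finset (α × α)) (k : ℕ) (F : Finset (α × α)) : Prop :=
  F ∈ FSet E k ∧ (aweight v F : EReal) = phi v E k

/-- Vertex set of the tree `T^F_i` of the entering forest `F` rooted at `i`:
all vertices from which `i` is reachable. -/
noncomputable def treeVerts (F : Finset (α × α)) (i : α) : Finset α :=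
  Finset.univ.filter fun j => Relation.ReflTransGen (arcRel F) j i

/-- Arc set of the tree `T^F_i`. -/
noncomputable def treeArcs (F : Finset (α × α)) (i : α) : Finset (α × α) :=
  F.filter fun a => a.1 ∈ treeVerts F i

/-- Induced subgraph (restriction) of the arc set `A` on the vertex set `S`. -/
def restrictArcs (A : Finset (α × α)) (S : Finset α) : Finset (α × α) :=
  A.filter fun a => a.1 ∈ S ∧ a.2 ∈ S

/-- `T ∈ 𝓣^{•q}_S`: `T` is an entering tree that is a subgraph of the digraph with
arc set `E`, with vertex set `S` and root `q`. -/
def IsTreeOn (E T : Finset (α × α)) (S : Finset α) (q : α) : Prop :=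
  q ∈ S ∧ T ⊆ E ∧ (∀ a ∈ T, a.1 ∈ S ∧ a.2 ∈ S) ∧
  (∀ i ∈ S, i ≠ q → ∃! j, (i, j) ∈ T) ∧
  (∀ j, (q, j) ∉ T) ∧
  ∀ i ∈ S, Relation.ReflTransGen (arcRel T) i q

/-- `λ^{•q}_S`. -/
noncomputable def lamB (v : α → α → ℝ) (E : Finset (α × α)) (S : Finset α) (q : α) : EReal :=
  minW {T | IsTreeOn E T S q} (aweight v)

/-- `λ^•_S = min_{q ∈ S} λ^{•q}_S`. -/
noncomputable def lamBul (v : α → α → ℝ) (E : Finset (α × α)) (S : Finset α) : EReal :=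
  minW {T | ∃ q ∈ S, IsTreeOn E T S q} (aweight v)

/-- `T ∈ 𝓣^{∘q}_S`: `T` has `|S| + 1` vertices, `T|_S` is an entering tree with vertex
set `S` and root `q`, and the single arc of `T` leaving `S` goes from `q` to the root
`r ∉ S` of `T`. -/
def IsCTreeOn (E T : Finset (α × α)) (S : Finset α) (q : α) : Prop :=
  ∃ r, r ∉ S ∧ ∃ T', IsTreeOn E T' S q ∧ (q, r) ∈ E ∧ T = insert (q, r) T'

/-- `λ^{∘q}_S`. -/
noncomputable def lamC (v : α → α → ℝ) (E : Finset (α × α)) (S : Finset α) (q : α) : EReal :=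
  minW {T | IsCTreeOn E T S q} (aweight v)

/-- `λ^∘_S = min_{q ∈ S} λ^{∘q}_S`. -/
noncomputable def lamCirc (v : α → α → ℝ) (E : Finset (α × α)) (S : Finset α) : EReal :=
  minW {T | ∃ q ∈ S, IsCTreeOn E T S q} (aweight v)

/-- `μ^∘_S`: minimum of `Υ^F_S` over the spanning entering forests `F ∈ 𝓕^∘_S`,
i.e. those in which every vertex of `S` has an outgoing arc. -/
noncomputable def muCirc (v : α → α → ℝ) (E : Finset (α × α)) (S : Finset α) : EReal :=
  minW {A | A ⊆ E ∧ IsEForest A ∧ ∀ i ∈ S, ∃ j, (i, j) ∈ A} fun A => aweightOn v A S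

/-- `G ∈ 𝓡^F_y`: `G` is a descendant of `F` at the root `y`, i.e. `y` is a root of
`F`, the roots of `G` are those of `F` except `y`, `G` induces `T^F_q` on the vertex
set of every tree of `F` other than `T^F_y`, and `G` induces a tree on the vertex set
of `T^F_y`. -/
def IsDescendant (E F G : Finset (α × α)) (y : α) : Prop :=
  y ∈ rootSet F ∧ rootSet G = rootSet F \ {y} ∧
  (∀ q ∈ rootSet G, restrictArcs G (treeVerts F q) = treeArcs F q) ∧
  ∃ a ∈ treeVerts F y, IsTreeOn E (restrictArcs G (treeVerts F y)) (treeVerts F y) a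

/-- A potential graph: a connected weighted undirected graph with a loop at every
vertex.  Edges are recorded as a symmetric reflexive set of ordered pairs, with a
symmetric weight function `p`. -/
structure PotGraph (α : Type*) [Fintype α] [DecidableEq α] where
  p : α → α → ℝ
  edges : Finset (α × α)
  symm_mem : ∀ i j, (i, j) ∈ edges → (j, i) ∈ edges
  loop_mem : ∀ i, (i, i) ∈ edges
  symm_w : ∀ i j, p i j = p j i
  connected : ∀ i j : α, Relation.ReflTransGen (fun a b => (a, b) ∈ edges ∧ a ≠ b) i j

/-- Arc set of the barrier digraph of the potential graph `P`: an arc `(i,j)`, `i ≠ j`,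
for each non-loop edge of `P`. -/
def barcs (P : PotGraph α) : Finset (α × α) := P.edges.filter fun a => a.1 ≠ a.2

/-- Arc weights of the barrier digraph: `v i j = p i j - p i i`. -/
def bw (P : PotGraph α) : α → α → ℝ := fun i j => P.p i j - P.p i i

/-- Weight of a set of undirected edges of `P`. -/
noncomputable def uweight (P : PotGraph α) (T : Finset (Sym2 α)) : ℝ :=
  ∑ e ∈ T, Sym2.lift ⟨P.p, P.symm_w⟩ e

/-- `T ∈ 𝓣_S`: `T` is an undirected tree that is a subgraph of `P` (loops unused)
with vertex set `S`: its edges are non-loop edges of `P` joining vertices of `S`,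
it is connected on `S`, and it has `|S| - 1` edges. -/
def IsUTreeOn (P : PotGraph α) (T : Finset (Sym2 α)) (S : Finset α) : Prop :=
  (∀ e ∈ T, ∃ i j, i ≠ j ∧ e = s(i, j) ∧ (i, j) ∈ P.edges ∧ i ∈ S ∧ j ∈ S) ∧
  (∀ i ∈ S, ∀ j ∈ S, Relation.ReflTransGen (fun a b => s(a, b) ∈ T) i j) ∧
  T.card + 1 = S.card

/-- `ν_S`: minimum weight of an undirected tree on `S` that is a subgraph of `P`. -/
noncomputable def nu (P : PotGraph α) (S : Finset α) : EReal :=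
  minW {T | IsUTreeOn P T S} (uweight P)

/-- The underlying undirected edge set of a set of arcs. -/
def undir (A : Finset (α × α)) : Finset (Sym2 α) := A.image fun a => s(a.1, a.2)

/-- `Tq` is the entering tree (with root `q`, vertex set `S`, subgraph of the barrier
digraph of `P`) corresponding to the undirected tree `T`: it is obtained from `T` by
directing all edges toward `q` and replacing the weight of each arc `(i,j)` by
`v i j = p i j - p i i`. -/
def Corresponds (P : PotGraph α) (Tq : Finset (α × α)) (T : Finset (Sym2 α))
    (S : Finset α) (q : α) : Prop :=
  IsTreeOn (barcs P) Tq S q ∧ undir Tq = T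


section Aux

/-- In an entering tree there cannot be two opposite arcs. -/
lemma no_opposite {E T : Finset (α × α)} {S : Finset α} {q : α}
    (h : IsTreeOn E T S q) {i j : α} (hij : (i, j) ∈ T) (hji : (j, i) ∈ T) : False := by
  obtain ⟨hqS, hsub, hmem, huniq, hqo, hreach⟩ := h
  have hiS : i ∈ S := (hmem _ hij).1
  have hiq : i ≠ q := fun h' => hqo j (h' ▸ hij)
  have hjq : j ≠ q := fun h' => hqo i (h' ▸ hji)
  have key : ∀ x, Relation.ReflTransGen (arcRel T) x q → x = i ∨ x = j → False := by
    intro x hx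
    induction hx using Relation.ReflTransGen.head_induction_on with
    | refl => rintro (rfl | rfl); exacts [hiq rfl, hjq rfl]
    | head h' _ ih =>
      rename_i a c _
      rintro (ha | ha)
      · obtain ⟨j', hj', huj⟩ := huniq i hiS hiq
        have h'' : (i, c) ∈ T := by rw [← ha]; exact h'
        have hc : c = j' := huj c h''
        have hj2 : j = j' := huj j hij
        exact ih (Or.inr (hc.trans hj2.symm))
      · have hjS : j ∈ S := (hmem _ hji).1
        obtain ⟨j', hj', huj⟩ := huniq j hjS hjq
        have h'' : (j, c) ∈ T := by rw [← ha]; exact h'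
        have hc : c = j' := huj c h''
        have hi2 : i = j' := huj i hji
        exact ih (Or.inl (hc.trans hi2.symm))
  exact key i (hreach i hiS) (Or.inl rfl)

/-- The map from arcs of an entering tree to undirected edges is injective. -/
lemma sym2_injOn {E T : Finset (α × α)} {S : Finset α} {q : α}
    (h : IsTreeOn E T S q) : ∀ a ∈ T, ∀ b ∈ T, s(a.1, a.2) = s(b.1, b.2) → a = b := by
  intro a ha b hb hab
  rcases Sym2.eq_iff.1 hab with ⟨h1, h2⟩ | ⟨h1, h2⟩
  · exact Prod.ext h1 h2
  · exfalso
    have ha' : (b.2, b.1) ∈ T := by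
      have : a = (b.2, b.1) := Prod.ext h1 h2
      rwa [this] at ha
    have hb' : (b.1, b.2) ∈ T := hb
    exact no_opposite ⟨h.1, h.2.1, h.2.2.1, h.2.2.2.1, h.2.2.2.2.1, h.2.2.2.2.2⟩ hb' ha'

/-- Summing a function of the tails of an entering tree's arcs is summing over `S \ {q}`. -/
lemma sum_fst {M : Type*} [AddCommMonoid M] {E T : Finset (α × α)} {S : Finset α} {q : α}
    (h : IsTreeOn E T S q) (f : α → M) :
    ∑ a ∈ T, f a.1 = ∑ i ∈ S.erase q, f i := by
  obtain ⟨hqS, hsub, hmem, huniq, hqo, hreach⟩ := h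
  refine Finset.sum_bij (fun a _ => a.1) ?_ ?_ ?_ ?_
  · intro a ha
    refine Finset.mem_erase.2 ⟨fun h' => hqo a.2 ?_, (hmem a ha).1⟩
    have h'' : a.1 = q := h'
    have ha' : (a.1, a.2) ∈ T := ha
    rwa [h''] at ha'
  · intro a ha b hb hab
    have hab' : a.1 = b.1 := hab
    have haS : a.1 ∈ S := (hmem a ha).1
    have haq : a.1 ≠ q := fun h' => hqo a.2 (by have ha' : (a.1, a.2) ∈ T := ha; rwa [h'] at ha')
    obtain ⟨j', hj', huj⟩ := huniq a.1 haS haq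
    have h1 : a.2 = j' := huj a.2 ha
    have h2 : b.2 = j' := huj b.2 (by show (a.1, b.2) ∈ T; have hb' : (b.1, b.2) ∈ T := hb; rwa [← hab'] at hb')
    exact Prod.ext hab' (h1.trans h2.symm)
  · intro i hi
    obtain ⟨hiq, hiS⟩ := Finset.mem_erase.1 hi
    obtain ⟨j', hj', _⟩ := huniq i hiS hiq
    exact ⟨(i, j'), hj', rfl⟩
  · intro a ha; rfl

/-- The number of arcs of an entering tree. -/
lemma card_tree {E T : Finset (α × α)} {S : Finset α} {q : α}
    (h : IsTreeOn E T S q) : T.card = (S.erase q).card := by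
  have := sum_fst h (fun _ => (1 : ℕ))
  simpa using this

/-- The undirected tree corresponding to an entering tree. -/
lemma utree_of_tree (P : PotGraph α) {T : Finset (α × α)} {S : Finset α} {q : α}
    (h : IsTreeOn (barcs P) T S q) : IsUTreeOn P (undir T) S := by
  refine ⟨?_, ?_, ?_⟩
  · intro e he
    obtain ⟨a, ha, rfl⟩ := Finset.mem_image.1 he
    have hb := h.2.1 ha
    rw [barcs, Finset.mem_filter] at hb
    exact ⟨a.1, a.2, hb.2, rfl, hb.1, (h.2.2.1 a ha).1, (h.2.2.1 a ha).2⟩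
  · intro i hi j hj
    have symm : Symmetric (fun a b => s(a, b) ∈ undir T) := by
      intro a b hab
      have : s(b, a) = s(a, b) := Sym2.eq_swap
      rwa [this]
    have mono : ∀ x y, arcRel T x y → s(x, y) ∈ undir T := fun x y hxy =>
      Finset.mem_image.2 ⟨(x, y), hxy, rfl⟩
    have hi' : Relation.ReflTransGen (fun a b => s(a, b) ∈ undir T) i q :=
      Relation.ReflTransGen.mono mono _ _ (h.2.2.2.2.2 i hi)
    have hj' : Relation.ReflTransGen (fun a b => s(a, b) ∈ undir T) j q :=
      Relation.ReflTransGen.mono mono _ _ (h.2.2.2.2.2 j hj)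
    exact hi'.trans (by haveI : Std.Symm (fun a b => s(a, b) ∈ undir T) := ⟨symm⟩; exact symm_of _ hj')
  · have hc1 : (undir T).card = T.card := Finset.card_image_of_injOn (sym2_injOn h)
    rw [hc1, card_tree h]
    exact Finset.card_erase_add_one h.1

/-- Weight relation between an entering tree and its undirected tree. -/
lemma weight_eq (P : PotGraph α) {T : Finset (α × α)} {S : Finset α} {q : α}
    (h : IsTreeOn (barcs P) T S q) :
    uweight P (undir T) = aweight (bw P) T + ∑ i ∈ S.erase q, P.p i i := by
  have h1 : uweight P (undir T) = ∑ a ∈ T, P.p a.1 a.2 := by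
    rw [uweight, undir, Finset.sum_image (sym2_injOn h)]
    exact Finset.sum_congr rfl fun a _ => Sym2.lift_mk _ a.1 a.2
  rw [h1, aweight, ← sum_fst h (fun i => P.p i i), ← Finset.sum_add_distrib]
  exact Finset.sum_congr rfl (fun a _ => by simp [bw])

/-- Auxiliary simple graph of an undirected tree on the vertex subtype. -/
def utG (U : Finset (Sym2 α)) (S : Finset α) : SimpleGraph {x // x ∈ S} where
  Adj a b := a ≠ b ∧ s(a.1, b.1) ∈ U
  symm := ⟨fun a b h => ⟨h.1.symm, by rw [Sym2.eq_swap]; exact h.2⟩⟩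
  loopless := ⟨fun a h => h.1 rfl⟩

/-- Every undirected tree on `S` can be oriented toward any `q ∈ S`. -/
lemma orient (P : PotGraph α) {U : Finset (Sym2 α)} {S : Finset α} {q : α}
    (hq : q ∈ S) (hU : IsUTreeOn P U S) :
    ∃ T', IsTreeOn (barcs P) T' S q ∧ undir T' = U := by
  classical
  have hedge : ∀ {i j : α}, s(i, j) ∈ U → i ≠ j ∧ (i, j) ∈ P.edges ∧ i ∈ S ∧ j ∈ S := by
    intro i j hij
    obtain ⟨i', j', hne, heq, hE, hiS, hjS⟩ := hU.1 _ hij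
    rcases Sym2.eq_iff.1 heq with ⟨rfl, rfl⟩ | ⟨rfl, rfl⟩
    · exact ⟨hne, hE, hiS, hjS⟩
    · exact ⟨hne.symm, P.symm_mem _ _ hE, hjS, hiS⟩
  set G : SimpleGraph {x // x ∈ S} := utG U S with hG
  have hAdj : ∀ a b : {x // x ∈ S}, G.Adj a b ↔ a ≠ b ∧ s(a.1, b.1) ∈ U := fun a b => Iff.rfl
  set qv : {x // x ∈ S} := ⟨q, hq⟩ with hqv
  have hNE : Nonempty {x // x ∈ S} := ⟨qv⟩
  have hconn : G.Connected := by
    refine ⟨fun a b => ?_⟩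
    have key : ∀ x y, Relation.ReflTransGen (fun a b => s(a, b) ∈ U) x y →
        ∀ (hx : x ∈ S) (hy : y ∈ S), G.Reachable ⟨x, hx⟩ ⟨y, hy⟩ := by
      intro x y hxy
      induction hxy with
      | refl => intro hx hy; exact SimpleGraph.Reachable.refl _
      | tail hxz hzy ih =>
        rename_i b y'
        intro hx hy
        obtain ⟨hbz, _, hbS, hyS⟩ := hedge hzy
        have hadj : G.Adj ⟨b, hbS⟩ ⟨y', hy⟩ :=
          (hAdj _ _).2 ⟨fun h => hbz (congrArg Subtype.val h), hzy⟩
        exact (ih hx hbS).trans hadj.reachable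
    have := key a.1 b.1 (hU.2.1 a.1 a.2 b.1 b.2) a.2 b.2
    exact this
  have hnext : ∀ v : {x // x ∈ S}, ∃ w : {x // x ∈ S}, v ≠ qv →
      s(v.1, w.1) ∈ U ∧ G.dist w qv < G.dist v qv := by
    intro v
    by_cases hv : v = qv
    · exact ⟨v, fun h => absurd hv h⟩
    · obtain ⟨p, hp⟩ := hconn.exists_walk_length_eq_dist v qv
      have hpos : 0 < p.length := by rw [hp]; exact hconn.pos_dist_of_ne hv
      have hnn : ¬ p.Nil := by rwa [SimpleGraph.Walk.not_nil_iff_lt_length]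
      have hadj : G.Adj v (p.getVert 1) := by
        have := p.adj_getVert_succ (i := 0) hpos
        simpa using this
      refine ⟨p.getVert 1, fun _ => ⟨((hAdj _ _).1 hadj).2, ?_⟩⟩
      have hle : G.dist (p.getVert 1) qv ≤ p.tail.length := SimpleGraph.dist_le p.tail
      have hlen : p.tail.length + 1 = p.length := SimpleGraph.Walk.length_tail_add_one hnn
      omega
  choose next hnext using hnext
  set Tv : Finset (α × α) := (Finset.univ.erase qv).image (fun v => (v.1, (next v).1)) with hTv
  have hTree : IsTreeOn (barcs P) Tv S q := by
    refine ⟨hq, ?_, ?_, ?_, ?_, ?_⟩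
    · intro a ha
      obtain ⟨v, hv, rfl⟩ := Finset.mem_image.1 ha
      have hvq : v ≠ qv := (Finset.mem_erase.1 hv).1
      obtain ⟨hne, hE, _, _⟩ := hedge (hnext v hvq).1
      exact Finset.mem_filter.2 ⟨hE, hne⟩
    · intro a ha
      obtain ⟨v, hv, rfl⟩ := Finset.mem_image.1 ha
      exact ⟨v.2, (next v).2⟩
    · intro i hi hiq
      have hvq : (⟨i, hi⟩ : {x // x ∈ S}) ≠ qv := fun h => hiq (congrArg Subtype.val h)
      refine ⟨(next ⟨i, hi⟩).1, Finset.mem_image.2 ⟨⟨i, hi⟩,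
        Finset.mem_erase.2 ⟨hvq, Finset.mem_univ _⟩, rfl⟩, ?_⟩
      intro j hj
      obtain ⟨w, hw, heq⟩ := Finset.mem_image.1 hj
      have h1 : w.1 = i := congrArg Prod.fst heq
      have h2 : (next w).1 = j := congrArg Prod.snd heq
      have hw' : w = ⟨i, hi⟩ := Subtype.ext h1
      rw [← h2, hw']
    · intro j hj
      obtain ⟨w, hw, heq⟩ := Finset.mem_image.1 hj
      have h1 : w.1 = q := congrArg Prod.fst heq
      exact (Finset.mem_erase.1 hw).1 (Subtype.ext h1)
    · have reach : ∀ n (v : {x // x ∈ S}), G.dist v qv ≤ n →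
          Relation.ReflTransGen (arcRel Tv) v.1 q := by
        intro n
        induction n with
        | zero =>
          intro v hv
          have h0 : v = qv := (hconn.dist_eq_zero_iff).1 (Nat.le_zero.1 hv)
          have : v.1 = q := congrArg Subtype.val h0
          rw [this]
        | succ n ih =>
          intro v hv
          by_cases hvq : v = qv
          · have : v.1 = q := congrArg Subtype.val hvq
            rw [this]
          · have h1 := hnext v hvq
            have harc : arcRel Tv v.1 (next v).1 :=
              Finset.mem_image.2 ⟨v, Finset.mem_erase.2 ⟨hvq, Finset.mem_univ _⟩, rfl⟩
            have hlt := h1.2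
            exact Relation.ReflTransGen.head harc (ih (next v) (by omega))
      intro i hi
      exact reach (G.dist ⟨i, hi⟩ qv) ⟨i, hi⟩ le_rfl
  refine ⟨Tv, hTree, ?_⟩
  have hsub : undir Tv ⊆ U := by
    intro e he
    obtain ⟨a, ha, rfl⟩ := Finset.mem_image.1 he
    obtain ⟨v, hv, rfl⟩ := Finset.mem_image.1 ha
    exact (hnext v (Finset.mem_erase.1 hv).1).1
  have hc1 : Tv.card = (Finset.univ.erase qv).card :=
    Finset.card_image_of_injOn (fun v _ w _ h => Subtype.ext (congrArg Prod.fst h))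
  have hc2 : ((Finset.univ : Finset {x // x ∈ S}).erase qv).card + 1 =
      Fintype.card {x // x ∈ S} := by
    rw [Finset.card_erase_add_one (Finset.mem_univ qv), Finset.card_univ]
  have hc3 : (undir Tv).card = Tv.card := Finset.card_image_of_injOn (sym2_injOn hTree)
  have hc4 : Fintype.card {x // x ∈ S} = S.card := Fintype.card_coe S
  have hc5 : U.card + 1 = S.card := hU.2.2
  exact Finset.eq_of_subset_of_card_le hsub (by omega)

end Aux

/-- Theorem 3.  `T_q ∈ 𝓣^{•q}_S` has minimum weight among entering
trees with vertex set `S` and root `q` iff the corresponding undirected tree `T` has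
minimum weight among undirected trees that are subgraphs of `P` with vertex set `S`. -/
theorem statement9 (P : PotGraph α) (S : Finset α) (q : α) (hq : q ∈ S)
    (Tq : Finset (α × α)) (hTq : IsTreeOn (barcs P) Tq S q)
    (T : Finset (Sym2 α)) (hT : undir Tq = T) :
    (∀ T', IsTreeOn (barcs P) T' S q → aweight (bw P) Tq ≤ aweight (bw P) T') ↔
      (∀ U, IsUTreeOn P U S → uweight P T ≤ uweight P U) := by
  subst hT
  constructor
  · intro hmin U hU
    obtain ⟨T', hT', hT'U⟩ := orient P hq hU
    have h1 := weight_eq P hTq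
    have h2 := weight_eq P hT'
    rw [hT'U] at h2
    have h3 := hmin T' hT'
    rw [h1, h2]
    linarith
  · intro hmin T' hT'
    have h1 := weight_eq P hTq
    have h2 := weight_eq P hT'
    have h3 := hmin (undir T') (utree_of_tree P hT')
    rw [h1, h2] at h3
    linarith

end BarrierForests
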